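/- The subgroup R_n of B_n generated by d together with r_1, …, r_n coincides with the subgroup generated by d together with r_1, …, r_{n−1}; in particular r_n lies in the subgroup generated by d and r_1, …, r_{n−1}, and d^2 lies in the subgroup R_n' generated by r_1, …, r_n. -/

import Mathlib

namespace Braid

/-- Braid relations on generators indexed by `Fin m`; the generator `i : Fin m` stands for the
Artin generator `σ_{i+1}` of the braid group on `m+1` strands: the relations are
`σ_i σ_j = σ_j σ_i` for `|i-j| ≥ 2` and `σ_i σ_{i+1} σ_i = σ_{i+1} σ_i σ_{i+1}`. -/
def braidRels (m : ℕ) : Set (FreeGroup (Fin m)) :=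
  {r | ∃ i j : Fin m, i.val + 2 ≤ j.val ∧
      r = .of i * .of j * (.of j * .of i)⁻¹} ∪
  {r | ∃ (i : Fin m) (hij : i.val + 1 < m),
      r = .of i * .of ⟨i.val + 1, hij⟩ * .of i *
        (.of ⟨i.val + 1, hij⟩ * .of i * .of ⟨i.val + 1, hij⟩)⁻¹}

/-- The Artin braid group `B_n` on `n` strands, presented with generators `σ_1, …, σ_{n-1}`
and the braid relations. -/
def BraidGroup (n : ℕ) : Type := PresentedGroup (braidRels (n - 1))

instance (n : ℕ) : Group (BraidGroup n) := by unfold BraidGroup; infer_instance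

/-- The Artin generator `σ_i` of `B_n`, for `1 ≤ i ≤ n-1` (junk value `1` otherwise). -/
def σ (n : ℕ) (i : ℕ) : BraidGroup n :=
  if h : 1 ≤ i ∧ i ≤ n - 1 then PresentedGroup.of ⟨i - 1, by omega⟩ else 1

/-- The ascending product `σ_a σ_{a+1} ⋯ σ_b` (empty product if `b < a`). -/
def up (n a b : ℕ) : BraidGroup n := ((List.range' a (b + 1 - a)).map (σ n)).prod

/-- The descending product `σ_a σ_{a-1} ⋯ σ_b` (empty product if `a < b`). -/
def down (n a b : ℕ) : BraidGroup n :=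
  ((List.range' b (a + 1 - b)).reverse.map (σ n)).prod

/-- The full twist `d = (σ_{n-1} ⋯ σ_2 σ_1)^n` of `B_n`. -/
def fullTwist (n : ℕ) : BraidGroup n := (down n (n - 1) 1) ^ n

/-- The flip `r_i = σ_{i-1} ⋯ σ_2 σ_1^2 σ_2 ⋯ σ_{n-2} σ_{n-1}^2 σ_{n-2} ⋯ σ_i` of `B_n`
(for `1 ≤ i ≤ n`), written as `(σ_{i-1} ⋯ σ_1) (σ_1 ⋯ σ_{n-1}) (σ_{n-1} ⋯ σ_i)`. -/
def flip (n i : ℕ) : BraidGroup n :=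
  down n (i - 1) 1 * up n 1 (n - 1) * down n (n - 1) i

/-- The descending product of flips `r_a r_{a-1} ⋯ r_b` (empty product if `a < b`). -/
def flipsDown (n a b : ℕ) : BraidGroup n :=
  ((List.range' b (a + 1 - b)).reverse.map (flip n)).prod

/-- The subgroup `R_n ⊆ B_n` generated by the full twist `d` and the flips `r_1, …, r_n`. -/
def R (n : ℕ) : Subgroup (BraidGroup n) :=
  Subgroup.closure ({fullTwist n} ∪ flip n '' Set.Icc 1 n)

/-- The subgroup `R_n' ⊆ B_n` generated by the flips `r_1, …, r_n`. -/
def R' (n : ℕ) : Subgroup (BraidGroup n) :=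
  Subgroup.closure (flip n '' Set.Icc 1 n)

private lemma swap_braid {n : ℕ} (a b c : Fin n) (hab : a ≠ b) (hbc : b ≠ c) (hac : a ≠ c) :
    Equiv.swap a b * Equiv.swap b c * Equiv.swap a b
      = Equiv.swap b c * Equiv.swap a b * Equiv.swap b c := by
  have h1 : Equiv.swap b a * Equiv.swap c b * Equiv.swap b a = Equiv.swap a c :=
    Equiv.swap_mul_swap_mul_swap (Ne.symm hbc) hac.symm
  have h2 : Equiv.swap b c * Equiv.swap a b * Equiv.swap b c = Equiv.swap c a :=
    Equiv.swap_mul_swap_mul_swap hab hac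
  rw [h2, Equiv.swap_comm a b, Equiv.swap_comm b c, h1, Equiv.swap_comm a c]

private lemma swap_commute {n : ℕ} (a b c d : Fin n)
    (hac : a ≠ c) (had : a ≠ d) (hbc : b ≠ c) (hbd : b ≠ d) :
    Equiv.swap a b * Equiv.swap c d = Equiv.swap c d * Equiv.swap a b := by
  refine Equiv.Perm.Disjoint.commute ?_
  intro x
  by_cases h1 : x = a
  · subst h1; right; exact Equiv.swap_apply_of_ne_of_ne hac had
  · by_cases h2 : x = b
    · subst h2; right; exact Equiv.swap_apply_of_ne_of_ne hbc hbd
    · left; exact Equiv.swap_apply_of_ne_of_ne h1 h2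

/-- The transposition `(i, i+1)` of `Fin n` associated to the generator `i : Fin (n-1)`. -/
def permGen (n : ℕ) (i : Fin (n - 1)) : Equiv.Perm (Fin n) :=
  Equiv.swap ⟨i.val, by have := i.isLt; omega⟩ ⟨i.val + 1, by have := i.isLt; omega⟩

/-- The homomorphism `B_n → Sym(n)` sending `σ_i` to the transposition `(i, i+1)`. -/
def toPerm (n : ℕ) : BraidGroup n →* Equiv.Perm (Fin n) :=
  PresentedGroup.toGroup (f := permGen n)
    (by
      rintro r (⟨i, j, hij, rfl⟩ | ⟨i, hij, rfl⟩) <;>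
        simp only [map_mul, map_inv, FreeGroup.lift_apply_of, permGen] <;> rw [mul_inv_eq_one]
      · refine swap_commute _ _ _ _ ?_ ?_ ?_ ?_ <;>
          · rw [ne_eq, Fin.mk.injEq]; omega
      · refine swap_braid _ _ _ ?_ ?_ ?_ <;>
          · rw [ne_eq, Fin.mk.injEq]; omega)

/-- The pure braid group `P_n`: the kernel of `B_n → Sym(n)`, `σ_i ↦ (i, i+1)`. -/
def P (n : ℕ) : Subgroup (BraidGroup n) := (toPerm n).ker

private lemma mk_rel_eq_one {m : ℕ} {r : FreeGroup (Fin m)} (h : r ∈ braidRels m) :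
    PresentedGroup.mk (braidRels m) r = 1 :=
  (QuotientGroup.eq_one_iff _).mpr (Subgroup.subset_normalClosure h)

lemma σ_comm {n i j : ℕ} (h1 : 1 ≤ i) (h2 : i + 2 ≤ j) (h3 : j ≤ n - 1) :
    σ n i * σ n j = σ n j * σ n i := by
  have e1 : σ n i = (PresentedGroup.of (rels := braidRels (n - 1)) ⟨i - 1, by omega⟩ :
      PresentedGroup (braidRels (n - 1))) := dif_pos ⟨h1, by omega⟩
  have e2 : σ n j = (PresentedGroup.of (rels := braidRels (n - 1)) ⟨j - 1, by omega⟩ :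
      PresentedGroup (braidRels (n - 1))) := dif_pos ⟨by omega, h3⟩
  rw [e1, e2]
  have hmem : (FreeGroup.of (⟨i - 1, by omega⟩ : Fin (n-1)) * .of ⟨j - 1, by omega⟩ *
      (.of ⟨j - 1, by omega⟩ * .of ⟨i - 1, by omega⟩)⁻¹) ∈ braidRels (n - 1) :=
    Or.inl ⟨⟨i - 1, by omega⟩, ⟨j - 1, by omega⟩, by show i - 1 + 2 ≤ j - 1; omega, rfl⟩
  have h := mk_rel_eq_one hmem
  rw [map_mul, map_inv, mul_inv_eq_one, map_mul, map_mul] at h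
  exact h

set_option maxHeartbeats 1600000 in
lemma σ_braid {n i : ℕ} (h1 : 1 ≤ i) (h2 : i + 1 ≤ n - 1) :
    σ n i * σ n (i + 1) * σ n i = σ n (i + 1) * σ n i * σ n (i + 1) := by
  have e1 : σ n i = (PresentedGroup.of (rels := braidRels (n - 1)) ⟨i - 1, by omega⟩ :
      PresentedGroup (braidRels (n - 1))) := dif_pos ⟨h1, by omega⟩
  have e2 : σ n (i + 1) = (PresentedGroup.of (rels := braidRels (n - 1))
      ⟨i + 1 - 1, by omega⟩ : PresentedGroup (braidRels (n - 1))) := dif_pos ⟨by omega, h2⟩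
  rw [e1, e2]
  have key : (⟨i + 1 - 1, by omega⟩ : Fin (n - 1)) = ⟨(i - 1) + 1, by omega⟩ := by
    rw [Fin.mk.injEq]; omega
  rw [key]
  have hmem : (FreeGroup.of (⟨i - 1, by omega⟩ : Fin (n-1)) * .of ⟨(i-1) + 1, by omega⟩ *
      .of ⟨i - 1, by omega⟩ *
      (.of ⟨(i-1) + 1, by omega⟩ * .of ⟨i - 1, by omega⟩ * .of ⟨(i-1)+1, by omega⟩)⁻¹)
      ∈ braidRels (n - 1) :=
    Or.inr ⟨⟨i - 1, by omega⟩, by show i - 1 + 1 < n - 1; omega, rfl⟩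
  have h := mk_rel_eq_one hmem
  rw [map_mul, map_inv, mul_inv_eq_one, map_mul, map_mul, map_mul, map_mul] at h
  exact h

/-- The canonical homomorphism `ι : B_{n-1} → B_n` determined by `σ_i ↦ σ_i`. -/
def ι (n : ℕ) : BraidGroup (n - 1) →* BraidGroup n :=
  PresentedGroup.toGroup (f := fun i : Fin (n - 1 - 1) => σ n (i.val + 1))
    (by
      rintro r (⟨i, j, hij, rfl⟩ | ⟨i, hij, rfl⟩) <;>
        simp only [map_mul, map_inv, FreeGroup.lift_apply_of] <;> rw [mul_inv_eq_one]
      · exact σ_comm (by omega) (by omega) (by have := j.isLt; omega)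
      · exact σ_braid (by omega) (by have := i.isLt; omega))



section Aux

variable {n : ℕ}

lemma σ_out {i : ℕ} (h : ¬(1 ≤ i ∧ i ≤ n - 1)) : σ n i = 1 := dif_neg h

lemma σ_commute {i j : ℕ} (h : i + 2 ≤ j) : Commute (σ n i) (σ n j) := by
  by_cases h1 : 1 ≤ i ∧ i ≤ n - 1
  · by_cases h2 : 1 ≤ j ∧ j ≤ n - 1
    · exact σ_comm h1.1 h h2.2
    · rw [σ_out h2]; exact Commute.one_right _
  · rw [σ_out h1]; exact Commute.one_left _

lemma up_empty {a b : ℕ} (h : b + 1 ≤ a) : up n a b = 1 := by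
  unfold up; rw [show b + 1 - a = 0 by omega]; rfl

lemma up_single (a : ℕ) : up n a a = σ n a := by
  unfold up; rw [show a + 1 - a = 1 by omega]; simp

lemma down_empty {a b : ℕ} (h : a + 1 ≤ b) : down n a b = 1 := by
  unfold down; rw [show a + 1 - b = 0 by omega]; rfl

lemma down_single (a : ℕ) : down n a a = σ n a := by
  unfold down; rw [show a + 1 - a = 1 by omega]; simp

lemma up_append {a b c : ℕ} (h1 : a ≤ c + 1) (h2 : c ≤ b) :
    up n a b = up n a c * up n (c + 1) b := by
  unfold up
  rw [show b + 1 - a = (c + 1 - a) + (b - c) by omega, ← List.range'_append_1,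
    List.map_append, List.prod_append, show a + (c + 1 - a) = c + 1 by omega,
    show b - c = b + 1 - (c + 1) by omega]

lemma down_append {a b c : ℕ} (h1 : b ≤ c + 1) (h2 : c ≤ a) :
    down n a b = down n a (c + 1) * down n c b := by
  unfold down
  rw [show a + 1 - b = (c + 1 - b) + (a - c) by omega, ← List.range'_append_1,
    List.reverse_append, List.map_append, List.prod_append,
    show b + (c + 1 - b) = c + 1 by omega, show a - c = a + 1 - (c + 1) by omega]

lemma up_cons {a b : ℕ} (h : a ≤ b) : up n a b = σ n a * up n (a + 1) b := by
  have := up_append (n := n) (a := a) (b := b) (c := a) (Nat.le_succ a) h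
  rwa [up_single] at this

lemma up_concat {a b : ℕ} (hb : 1 ≤ b) (h : a ≤ b) :
    up n a b = up n a (b - 1) * σ n b := by
  have := up_append (n := n) (a := a) (b := b) (c := b - 1) (by omega) (by omega)
  rwa [show b - 1 + 1 = b by omega, up_single] at this

lemma down_cons {a b : ℕ} (ha : 1 ≤ a) (h : b ≤ a) :
    down n a b = σ n a * down n (a - 1) b := by
  have := down_append (n := n) (a := a) (b := b) (c := a - 1) (by omega) (by omega)
  rwa [show a - 1 + 1 = a by omega, down_single] at this

lemma down_concat {a b : ℕ} (h : b ≤ a) :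
    down n a b = down n a (b + 1) * σ n b := by
  have := down_append (n := n) (a := a) (b := b) (c := b) (by omega) h
  rwa [down_single] at this

lemma commute_up {t a b : ℕ} (h : ∀ x, a ≤ x → x ≤ b → t + 2 ≤ x ∨ x + 2 ≤ t) :
    Commute (σ n t) (up n a b) := by
  apply Commute.list_prod_right
  intro x hx
  simp only [List.mem_map, List.mem_range'_1] at hx
  obtain ⟨y, hy, rfl⟩ := hx
  rcases h y (by omega) (by omega) with h' | h'
  · exact σ_commute h'
  · exact (σ_commute h').symm

lemma commute_down {t a b : ℕ} (h : ∀ x, b ≤ x → x ≤ a → t + 2 ≤ x ∨ x + 2 ≤ t) :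
    Commute (σ n t) (down n a b) := by
  apply Commute.list_prod_right
  intro x hx
  simp only [List.mem_map, List.mem_reverse, List.mem_range'_1] at hx
  obtain ⟨y, hy, rfl⟩ := hx
  rcases h y (by omega) (by omega) with h' | h'
  · exact σ_commute h'
  · exact (σ_commute h').symm

end Aux
section Aux2

variable {n : ℕ}

lemma up_sigma {b i a : ℕ} (hb : 1 ≤ b) (hbi : b ≤ i) (hia : i + 1 ≤ a)
    (han : a ≤ n - 1) : up n b a * σ n i = σ n (i + 1) * up n b a := by
  have hsplit : up n b a = up n b (i - 1) * σ n i * σ n (i + 1) * up n (i + 2) a := by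
    rw [up_append (a := b) (b := a) (c := i + 1) (by omega) hia,
      up_concat (a := b) (b := i + 1) (by omega) (by omega),
      show i + 1 - 1 = i by omega, up_concat (a := b) (b := i) (by omega) hbi,
      show i + 1 + 1 = i + 2 from rfl]
  have hc1 : up n (i + 2) a * σ n i = σ n i * up n (i + 2) a :=
    (commute_up (fun x hx1 _ => Or.inl (by omega))).symm.eq
  have hc2 : σ n (i + 1) * up n b (i - 1) = up n b (i - 1) * σ n (i + 1) :=
    (commute_up (fun x _ hx2 => Or.inr (by omega))).eq
  have hbr := σ_braid (n := n) (i := i) (by omega) (by omega)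
  calc up n b a * σ n i
      = up n b (i - 1) * (σ n i * σ n (i + 1) * σ n i) * up n (i + 2) a := by
        rw [hsplit, mul_assoc _ _ (σ n i), mul_assoc _ _ (σ n i), hc1]; group
    _ = up n b (i - 1) * (σ n (i + 1) * σ n i * σ n (i + 1)) * up n (i + 2) a := by
        rw [hbr]
    _ = σ n (i + 1) * up n b a := by
        rw [hsplit, show up n b (i-1) * (σ n (i+1) * σ n i * σ n (i+1)) =
          (up n b (i-1) * σ n (i+1)) * (σ n i * σ n (i+1)) by group, ← hc2]; group

lemma down_sigma {b i a : ℕ} (hb : 1 ≤ b) (hbi : b ≤ i) (hia : i + 1 ≤ a)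
    (han : a ≤ n - 1) : down n a b * σ n (i + 1) = σ n i * down n a b := by
  have hsplit : down n a b
      = down n a (i + 2) * σ n (i + 1) * σ n i * down n (i - 1) b := by
    rw [down_append (a := a) (b := b) (c := i + 1) (by omega) hia,
      down_cons (a := i + 1) (b := b) (by omega) (by omega),
      show i + 1 - 1 = i by omega, down_cons (a := i) (b := b) (by omega) hbi,
      show i + 1 + 1 = i + 2 from rfl]
    group
  have hc1 : down n (i - 1) b * σ n (i + 1) = σ n (i + 1) * down n (i - 1) b :=
    (commute_down (fun x _ hx2 => Or.inr (by omega))).symm.eq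
  have hc2 : σ n i * down n a (i + 2) = down n a (i + 2) * σ n i :=
    (commute_down (fun x hx1 _ => Or.inl (by omega))).eq
  have hbr := σ_braid (n := n) (i := i) (by omega) (by omega)
  calc down n a b * σ n (i + 1)
      = down n a (i + 2) * (σ n (i + 1) * σ n i * σ n (i + 1)) * down n (i - 1) b := by
        rw [hsplit, mul_assoc _ _ (σ n (i+1)), mul_assoc _ _ (σ n (i+1)), hc1]; group
    _ = down n a (i + 2) * (σ n i * σ n (i + 1) * σ n i) * down n (i - 1) b := by
        rw [← hbr]
    _ = σ n i * down n a b := by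
        rw [hsplit, show down n a (i+2) * (σ n i * σ n (i+1) * σ n i) =
          (down n a (i+2) * σ n i) * (σ n (i+1) * σ n i) by group, ← hc2]; group

end Aux2
section Aux3

variable {n : ℕ}

/-- Pushing a descending block through `σ_1 ⋯ σ_m` shifts it down by one. -/
lemma down_mul_up1 {m b : ℕ} (hb : 2 ≤ b) (hm : m ≤ n - 1) :
    ∀ a, a ≤ m → down n a b * up n 1 m = up n 1 m * down n (a - 1) (b - 1) := by
  intro a
  induction a with
  | zero =>
    intro _
    rw [down_empty (a := 0) (by omega), down_empty (a := 0 - 1) (by omega),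
      one_mul, mul_one]
  | succ a ih =>
    intro ha
    by_cases hab : b ≤ a + 1
    · have hs : up n 1 m * σ n a = σ n (a + 1) * up n 1 m :=
        up_sigma le_rfl (by omega) (by omega) hm
      have hcons : down n a (b - 1) = σ n a * down n (a - 1) (b - 1) :=
        down_cons (by omega) (by omega)
      rw [down_cons (by omega) hab, show a + 1 - 1 = a from rfl, mul_assoc,
        ih (by omega), ← mul_assoc, ← hs, mul_assoc, hcons]
    · rw [down_empty (a := a + 1) (by omega), down_empty (a := a + 1 - 1) (by omega),
        one_mul, mul_one]

/-- Pushing `σ_m ⋯ σ_1` through an ascending block shifts the block down by one. -/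
lemma down1_mul_up {m b : ℕ} (hb : 2 ≤ b) (hm : m ≤ n - 1) :
    ∀ a, a ≤ m → down n m 1 * up n b a = up n (b - 1) (a - 1) * down n m 1 := by
  intro a
  induction a with
  | zero =>
    intro _
    rw [up_empty (b := 0) (by omega), up_empty (b := 0 - 1) (by omega),
      one_mul, mul_one]
  | succ a ih =>
    intro ha
    by_cases hab : b ≤ a + 1
    · have hs : down n m 1 * σ n (a + 1) = σ n a * down n m 1 :=
        down_sigma le_rfl (by omega) (by omega) hm
      have hcat : up n (b - 1) a = up n (b - 1) (a - 1) * σ n a :=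
        up_concat (by omega) (by omega)
      rw [up_concat (by omega) hab, show a + 1 - 1 = a from rfl, ← mul_assoc,
        ih (by omega), mul_assoc, hs, ← mul_assoc, hcat]
    · rw [up_empty (a := b) (by omega), up_empty (a := b - 1) (by omega),
        one_mul, mul_one]

/-- Pushing `σ_1 ⋯ σ_m` past a descending block shifts the block up by one. -/
lemma up1_mul_down {m b : ℕ} (hb : 1 ≤ b) (hm : m ≤ n - 1) :
    ∀ a, a + 1 ≤ m → up n 1 m * down n a b = down n (a + 1) (b + 1) * up n 1 m := by
  intro a
  induction a with
  | zero =>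
    intro _
    rw [down_empty (a := 0) (by omega), down_empty (a := 0 + 1) (by omega),
      one_mul, mul_one]
  | succ a ih =>
    intro ha
    by_cases hab : b ≤ a + 1
    · have hs : up n 1 m * σ n (a + 1) = σ n (a + 2) * up n 1 m :=
        up_sigma le_rfl (by omega) (by omega) hm
      have hcons : down n (a + 1 + 1) (b + 1) = σ n (a + 2) * down n (a + 1) (b + 1) := by
        have := down_cons (n := n) (a := a + 2) (b := b + 1) (by omega) (by omega)
        rwa [show a + 2 - 1 = a + 1 from rfl] at this
      rw [down_cons (by omega) hab, show a + 1 - 1 = a from rfl, ← mul_assoc, hs,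
        mul_assoc, ih (by omega), ← mul_assoc, hcons]
    · rw [down_empty (a := a + 1) (by omega), down_empty (a := a + 1 + 1) (by omega),
        one_mul, mul_one]

/-- Pushing `σ_1 ⋯ σ_m` past an ascending block shifts the block up by one. -/
lemma up1_mul_up {m b : ℕ} (hb : 1 ≤ b) (hm : m ≤ n - 1) :
    ∀ a, a + 1 ≤ m → up n 1 m * up n b a = up n (b + 1) (a + 1) * up n 1 m := by
  intro a
  induction a with
  | zero =>
    intro _
    rw [up_empty (a := b) (b := 0) (by omega), up_empty (a := b + 1) (b := 0 + 1) (by omega),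
      one_mul, mul_one]
  | succ a ih =>
    intro ha
    by_cases hab : b ≤ a + 1
    · have hs : up n 1 m * σ n (a + 1) = σ n (a + 2) * up n 1 m :=
        up_sigma le_rfl (by omega) (by omega) hm
      have hcat : up n (b + 1) (a + 1 + 1) = up n (b + 1) (a + 1) * σ n (a + 2) := by
        have := up_concat (n := n) (a := b + 1) (b := a + 2) (by omega) (by omega)
        rwa [show a + 2 - 1 = a + 1 from rfl] at this
      rw [up_concat (by omega) hab, show a + 1 - 1 = a from rfl, ← mul_assoc,
        ih (by omega), mul_assoc, hs, ← mul_assoc, hcat]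
    · rw [up_empty (a := b) (by omega), up_empty (a := b + 1) (b := a + 1 + 1) (by omega),
        one_mul, mul_one]

end Aux3
section Aux4

variable {n : ℕ}

/-- Key step: `(σ_{n-1} ⋯ σ_j) · u = U · (σ_{n-1} ⋯ σ_{j-1})` where `u = σ_1 ⋯ σ_{n-1}`
and `U = σ_1 ⋯ σ_{n-2}`. -/
lemma key_step (hn : 2 ≤ n) {j : ℕ} (hj2 : 2 ≤ j) (hjn : j ≤ n) :
    down n (n - 1) j * up n 1 (n - 1) = up n 1 (n - 2) * down n (n - 1) (j - 1) := by
  by_cases hj : j = n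
  · have hu : up n 1 (n - 1) = up n 1 (n - 2) * σ n (n - 1) := by
      have := up_concat (n := n) (a := 1) (b := n - 1) (by omega) (by omega)
      rwa [show n - 1 - 1 = n - 2 from rfl] at this
    rw [hj, down_empty (by omega), one_mul, down_single, hu]
  · have hjlt : j < n := by omega
    have hn3 : 3 ≤ n := by omega
    have hu : up n 1 (n - 1) = up n 1 (n - 2) * σ n (n - 1) := by
      have := up_concat (n := n) (a := 1) (b := n - 1) (by omega) (by omega)
      rwa [show n - 1 - 1 = n - 2 from rfl] at this
    have hU : up n 1 (n - 2) = up n 1 (n - 3) * σ n (n - 2) := by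
      have := up_concat (n := n) (a := 1) (b := n - 2) (by omega) (by omega)
      rwa [show n - 2 - 1 = n - 3 from rfl] at this
    have hd : down n (n - 1) j = σ n (n - 1) * down n (n - 2) j := by
      have := down_cons (n := n) (a := n - 1) (b := j) (by omega) (by omega)
      rwa [show n - 1 - 1 = n - 2 from rfl] at this
    have hmain : down n (n - 2) j * up n 1 (n - 2)
        = up n 1 (n - 2) * down n (n - 3) (j - 1) := by
      have := down_mul_up1 (n := n) (m := n - 2) (b := j) hj2 (by omega) (n - 2) le_rfl
      rwa [show n - 2 - 1 = n - 3 from rfl] at this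
    have hcomm : σ n (n - 1) * down n (n - 3) (j - 1)
        = down n (n - 3) (j - 1) * σ n (n - 1) :=
      (commute_down (fun x _ hx2 => Or.inr (by omega))).eq
    have hcomm2 : σ n (n - 1) * up n 1 (n - 3) = up n 1 (n - 3) * σ n (n - 1) :=
      (commute_up (fun x _ hx2 => Or.inr (by omega))).eq
    have hbr : σ n (n - 2) * σ n (n - 2 + 1) * σ n (n - 2)
        = σ n (n - 2 + 1) * σ n (n - 2) * σ n (n - 2 + 1) :=
      σ_braid (by omega) (by omega)
    rw [show n - 2 + 1 = n - 1 by omega] at hbr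
    have hbrX : σ n (n - 1) * (σ n (n - 2) * (σ n (n - 1) * down n (n - 3) (j - 1)))
        = σ n (n - 2) * (σ n (n - 1) * (σ n (n - 2) * down n (n - 3) (j - 1))) := by
      simp only [← mul_assoc]; rw [← hbr]
    have hdown : down n (n - 1) (j - 1)
        = σ n (n - 1) * (σ n (n - 2) * down n (n - 3) (j - 1)) := by
      have h1 := down_cons (n := n) (a := n - 1) (b := j - 1) (by omega) (by omega)
      have h2 := down_cons (n := n) (a := n - 2) (b := j - 1) (by omega) (by omega)
      rw [show n - 1 - 1 = n - 2 from rfl] at h1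
      rw [show n - 2 - 1 = n - 3 from rfl] at h2
      rw [h1, h2]
    calc down n (n - 1) j * up n 1 (n - 1)
        = σ n (n - 1) * (down n (n - 2) j * up n 1 (n - 2)) * σ n (n - 1) := by
          rw [hd, hu]; group
      _ = up n 1 (n - 2) * down n (n - 1) (j - 1) := by
          rw [hmain, hU, hdown]
          simp only [mul_assoc]
          rw [← hcomm, ← mul_assoc (σ n (n - 1)) (up n 1 (n - 3)), hcomm2]
          simp only [mul_assoc]
          rw [hbrX]

/-- Mirror key step: `c · (σ_j ⋯ σ_{n-1}) = (σ_{j-1} ⋯ σ_{n-1}) · C` where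
`c = σ_{n-1} ⋯ σ_1` and `C = σ_{n-2} ⋯ σ_1`. -/
lemma key_step' (hn : 2 ≤ n) {j : ℕ} (hj2 : 2 ≤ j) (hjn : j ≤ n) :
    down n (n - 1) 1 * up n j (n - 1) = up n (j - 1) (n - 1) * down n (n - 2) 1 := by
  have hc : down n (n - 1) 1 = σ n (n - 1) * down n (n - 2) 1 := by
    have := down_cons (n := n) (a := n - 1) (b := 1) (by omega) (by omega)
    rwa [show n - 1 - 1 = n - 2 from rfl] at this
  by_cases hj : j = n
  · rw [hj, up_empty (by omega), mul_one, up_single, hc]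
  · have hjlt : j < n := by omega
    have hn3 : 3 ≤ n := by omega
    have hC : down n (n - 2) 1 = σ n (n - 2) * down n (n - 3) 1 := by
      have := down_cons (n := n) (a := n - 2) (b := 1) (by omega) (by omega)
      rwa [show n - 2 - 1 = n - 3 from rfl] at this
    have hup : up n j (n - 1) = up n j (n - 2) * σ n (n - 1) := by
      have := up_concat (n := n) (a := j) (b := n - 1) (by omega) (by omega)
      rwa [show n - 1 - 1 = n - 2 from rfl] at this
    have hmain : down n (n - 2) 1 * up n j (n - 2)
        = up n (j - 1) (n - 3) * down n (n - 2) 1 := by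
      have := down1_mul_up (n := n) (m := n - 2) (b := j) hj2 (by omega) (n - 2) le_rfl
      rwa [show n - 2 - 1 = n - 3 from rfl] at this
    have hcomm : σ n (n - 1) * up n (j - 1) (n - 3)
        = up n (j - 1) (n - 3) * σ n (n - 1) :=
      (commute_up (fun x _ hx2 => Or.inr (by omega))).eq
    have hcomm2 : σ n (n - 1) * down n (n - 3) 1 = down n (n - 3) 1 * σ n (n - 1) :=
      (commute_down (fun x _ hx2 => Or.inr (by omega))).eq
    have hbr : σ n (n - 2) * σ n (n - 2 + 1) * σ n (n - 2)
        = σ n (n - 2 + 1) * σ n (n - 2) * σ n (n - 2 + 1) :=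
      σ_braid (by omega) (by omega)
    rw [show n - 2 + 1 = n - 1 by omega] at hbr
    have hbrX : σ n (n - 1) * (σ n (n - 2) * (σ n (n - 1) * down n (n - 3) 1))
        = σ n (n - 2) * (σ n (n - 1) * (σ n (n - 2) * down n (n - 3) 1)) := by
      simp only [← mul_assoc]; rw [← hbr]
    have hupfin : up n (j - 1) (n - 1)
        = up n (j - 1) (n - 3) * σ n (n - 2) * σ n (n - 1) := by
      have h1 := up_concat (n := n) (a := j - 1) (b := n - 1) (by omega) (by omega)
      have h2 := up_concat (n := n) (a := j - 1) (b := n - 2) (by omega) (by omega)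
      rw [show n - 1 - 1 = n - 2 from rfl] at h1
      rw [show n - 2 - 1 = n - 3 from rfl] at h2
      rw [h1, h2]
    calc down n (n - 1) 1 * up n j (n - 1)
        = σ n (n - 1) * (down n (n - 2) 1 * up n j (n - 2)) * σ n (n - 1) := by
          rw [hc, hup]; group
      _ = up n (j - 1) (n - 1) * down n (n - 2) 1 := by
          rw [hmain, hC, hupfin]
          simp only [mul_assoc]
          rw [← hcomm2, ← mul_assoc (σ n (n - 1)) (up n (j - 1) (n - 3)), hcomm]
          simp only [mul_assoc]
          rw [hbrX]

end Aux4
section Aux5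

variable {n : ℕ}


private lemma pow_pred_mul {G : Type*} [Monoid G] (x : G) {k : ℕ} (h : 1 ≤ k) :
    x ^ k = x ^ (k - 1) * x := by
  conv_lhs => rw [show k = (k - 1) + 1 by omega]
  rw [pow_succ]

private lemma mul_pow_pred {G : Type*} [Monoid G] (x : G) {k : ℕ} (h : 1 ≤ k) :
    x ^ k = x * x ^ (k - 1) := by
  conv_lhs => rw [show k = (k - 1) + 1 by omega]
  rw [pow_succ']

lemma u_pow (hn : 2 ≤ n) :
    ∀ k, k ≤ n - 1 →
      up n 1 (n - 1) ^ k = up n 1 (n - 2) ^ k * down n (n - 1) (n - k) := by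
  intro k
  induction k with
  | zero => intro _; rw [pow_zero, pow_zero, down_empty (by omega), one_mul]
  | succ k ih =>
    intro hk
    have hks : down n (n - 1) (n - k) * up n 1 (n - 1)
        = up n 1 (n - 2) * down n (n - 1) (n - (k + 1)) := by
      have := key_step (n := n) hn (j := n - k) (by omega) (by omega)
      rwa [show n - k - 1 = n - (k + 1) by omega] at this
    rw [pow_succ, ih (by omega), mul_assoc, hks, pow_succ]
    group

lemma c_pow (hn : 2 ≤ n) :
    ∀ k, k ≤ n - 1 →
      down n (n - 1) 1 ^ k = up n (n - k) (n - 1) * down n (n - 2) 1 ^ k := by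
  intro k
  induction k with
  | zero => intro _; rw [pow_zero, pow_zero, up_empty (by omega), mul_one]
  | succ k ih =>
    intro hk
    have hks : down n (n - 1) 1 * up n (n - k) (n - 1)
        = up n (n - (k + 1)) (n - 1) * down n (n - 2) 1 := by
      have := key_step' (n := n) hn (j := n - k) (by omega) (by omega)
      rwa [show n - k - 1 = n - (k + 1) by omega] at this
    rw [pow_succ', ih (by omega), ← mul_assoc, hks, pow_succ']
    group

lemma flip_top (hn : 2 ≤ n) :
    flip n n = down n (n - 1) 1 * up n 1 (n - 1) := by
  unfold flip
  rw [down_empty (a := n - 1) (b := n) (by omega), mul_one]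

lemma flip_bot (hn : 2 ≤ n) :
    flip n 1 = up n 1 (n - 1) * down n (n - 1) 1 := by
  unfold flip
  rw [down_empty (a := 1 - 1) (b := 1) (by omega), one_mul]

lemma u_pow_n (hn : 2 ≤ n) :
    up n 1 (n - 1) ^ n = up n 1 (n - 2) ^ (n - 1) * flip n n := by
  have h1 : up n 1 (n - 1) ^ n = up n 1 (n - 1) ^ (n - 1) * up n 1 (n - 1) :=
    pow_pred_mul _ (by omega)
  rw [h1, u_pow hn (n - 1) le_rfl, show n - (n - 1) = 1 by omega, flip_top hn,
    mul_assoc]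

lemma c_pow_n (hn : 2 ≤ n) :
    down n (n - 1) 1 ^ n = flip n n * down n (n - 2) 1 ^ (n - 1) := by
  have h1 : down n (n - 1) 1 ^ n = down n (n - 1) 1 * down n (n - 1) 1 ^ (n - 1) :=
    mul_pow_pred _ (by omega)
  rw [h1, c_pow hn (n - 1) le_rfl, show n - (n - 1) = 1 by omega, flip_top hn,
    ← mul_assoc]

lemma flip_top_commute_σ (hn : 2 ≤ n) {x : ℕ} (hx : x ≤ n - 2) :
    Commute (flip n n) (σ n x) := by
  rcases Nat.eq_zero_or_pos x with rfl | hx1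
  · rw [σ_out (by omega)]; exact Commute.one_right _
  · have h1 : up n 1 (n - 1) * σ n x = σ n (x + 1) * up n 1 (n - 1) :=
      up_sigma le_rfl hx1 (by omega) le_rfl
    have h2 : down n (n - 1) 1 * σ n (x + 1) = σ n x * down n (n - 1) 1 :=
      down_sigma le_rfl hx1 (by omega) le_rfl
    show flip n n * σ n x = σ n x * flip n n
    rw [flip_top hn, mul_assoc, h1, ← mul_assoc, h2]
    group

lemma flip_top_commute_up (hn : 2 ≤ n) {a b : ℕ} (hb : b ≤ n - 2) :
    Commute (flip n n) (up n a b) := by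
  apply Commute.list_prod_right
  intro x hx
  simp only [List.mem_map, List.mem_range'_1] at hx
  obtain ⟨y, hy, rfl⟩ := hx
  exact flip_top_commute_σ hn (by omega)

lemma flip_top_commute_down (hn : 2 ≤ n) {a b : ℕ} (ha : a ≤ n - 2) :
    Commute (flip n n) (down n a b) := by
  apply Commute.list_prod_right
  intro x hx
  simp only [List.mem_map, List.mem_reverse, List.mem_range'_1] at hx
  obtain ⟨y, hy, rfl⟩ := hx
  exact flip_top_commute_σ hn (by omega)

end Aux5
section Aux6

variable {n : ℕ}

lemma ι_σ (hn : 2 ≤ n) {i : ℕ} (h : i ≤ n - 2) : ι n (σ (n - 1) i) = σ n i := by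
  rcases Nat.eq_zero_or_pos i with rfl | h1
  · rw [σ_out (by omega), σ_out (by omega), map_one]
  · have e1 : σ (n - 1) i = (PresentedGroup.of (rels := braidRels (n - 1 - 1))
        ⟨i - 1, by omega⟩ : PresentedGroup (braidRels (n - 1 - 1))) := dif_pos ⟨h1, by omega⟩
    rw [e1]
    show PresentedGroup.toGroup _ (PresentedGroup.of _) = _
    rw [PresentedGroup.toGroup.of]
    show σ n (i - 1 + 1) = _
    rw [show i - 1 + 1 = i by omega]

lemma ι_up (hn : 2 ≤ n) {a b : ℕ} (hb : b ≤ n - 2) :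
    ι n (up (n - 1) a b) = up n a b := by
  unfold up
  rw [map_list_prod, List.map_map]
  congr 1
  apply List.map_congr_left
  intro x hx
  rw [List.mem_range'_1] at hx
  exact ι_σ hn (by omega)

lemma ι_down (hn : 2 ≤ n) {a b : ℕ} (ha : a ≤ n - 2) :
    ι n (down (n - 1) a b) = down n a b := by
  unfold down
  rw [map_list_prod, List.map_map]
  congr 1
  apply List.map_congr_left
  intro x hx
  rw [List.mem_reverse, List.mem_range'_1] at hx
  exact ι_σ hn (by omega)

lemma un_eq_cn : ∀ n : ℕ, 2 ≤ n → up n 1 (n - 1) ^ n = down n (n - 1) 1 ^ n := by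
  intro n hn
  induction n, hn using Nat.le_induction with
  | base => rw [show (2 : ℕ) - 1 = 1 from rfl, up_single, down_single]
  | succ n hn ih =>
    have hn' : 2 ≤ n + 1 := by omega
    have hU : ι (n + 1) (up n 1 (n - 1)) = up (n + 1) 1 (n - 1) :=
      ι_up (n := n + 1) hn' (by omega)
    have hC : ι (n + 1) (down n (n - 1) 1) = down (n + 1) (n - 1) 1 :=
      ι_down (n := n + 1) hn' (by omega)
    have key : up (n + 1) 1 (n - 1) ^ n = down (n + 1) (n - 1) 1 ^ n := by
      have h := congrArg (ι (n + 1)) ih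
      rwa [map_pow, map_pow, hU, hC] at h
    have hcom : Commute (flip (n + 1) (n + 1)) (up (n + 1) 1 (n - 1) ^ n) :=
      (flip_top_commute_up (n := n + 1) hn' (by omega)).pow_right n
    have h1 : up (n + 1) 1 (n + 1 - 1) ^ (n + 1)
        = up (n + 1) 1 (n + 1 - 2) ^ (n + 1 - 1) * flip (n + 1) (n + 1) :=
      u_pow_n hn'
    have h2 : down (n + 1) (n + 1 - 1) 1 ^ (n + 1)
        = flip (n + 1) (n + 1) * down (n + 1) (n + 1 - 2) 1 ^ (n + 1 - 1) :=
      c_pow_n hn'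
    rw [show n + 1 - 1 = n from rfl] at h1 h2 ⊢
    rw [show n + 1 - 2 = n - 1 from rfl] at h1 h2
    rw [h1, h2, ← key, hcom.symm.eq]

end Aux6
section Aux7

variable {n : ℕ}

lemma flip_conj (hn : 2 ≤ n) {i : ℕ} (h1 : 1 ≤ i) (h2 : i ≤ n - 1) :
    up n 1 (n - 1) * flip n i = flip n (i + 1) * up n 1 (n - 1) := by
  have hA : up n 1 (n - 1) * down n (i - 1) 1 = down n i 2 * up n 1 (n - 1) := by
    have := up1_mul_down (n := n) (m := n - 1) (b := 1) le_rfl le_rfl (i - 1) (by omega)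
    rwa [show i - 1 + 1 = i by omega, show (1 : ℕ) + 1 = 2 from rfl] at this
  have hu2 : up n 1 (n - 1) = σ n 1 * up n 2 (n - 1) := by
    have := up_cons (n := n) (a := 1) (b := n - 1) (by omega)
    rwa [show (1 : ℕ) + 1 = 2 from rfl] at this
  have hB : up n 1 (n - 1) * up n 1 (n - 2) = up n 2 (n - 1) * up n 1 (n - 1) := by
    have := up1_mul_up (n := n) (m := n - 1) (b := 1) le_rfl le_rfl (n - 2) (by omega)
    rwa [show n - 2 + 1 = n - 1 by omega, show (1 : ℕ) + 1 = 2 from rfl] at this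
  have hBB : up n 1 (n - 1) * up n 1 (n - 1)
      = σ n 1 * (up n 1 (n - 1) * up n 1 (n - 2)) := by
    rw [hB, ← mul_assoc, ← hu2]
  have hC : down n i 1 = down n i 2 * σ n 1 := by
    have := down_concat (n := n) (a := i) (b := 1) h1
    rwa [show (1 : ℕ) + 1 = 2 from rfl] at this
  have hD : up n 1 (n - 2) * down n (n - 1) i
      = down n (n - 1) (i + 1) * up n 1 (n - 1) := by
    have := key_step (n := n) hn (j := i + 1) (by omega) (by omega)
    rw [show i + 1 - 1 = i from rfl] at this
    exact this.symm
  have hflip : flip n i = down n (i - 1) 1 * up n 1 (n - 1) * down n (n - 1) i := rfl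
  have hflip1 : flip n (i + 1)
      = down n i 1 * up n 1 (n - 1) * down n (n - 1) (i + 1) := by
    unfold flip; rw [show i + 1 - 1 = i from rfl]
  rw [hflip, hflip1, hC]
  simp only [mul_assoc]
  rw [← mul_assoc (up n 1 (n - 1)) (down n (i - 1) 1), hA]
  simp only [mul_assoc]
  rw [← mul_assoc (up n 1 (n - 1)) (up n 1 (n - 1)), hBB]
  simp only [mul_assoc]
  rw [hD]

lemma flip_pow_conj (hn : 2 ≤ n) :
    ∀ k, k ≤ n - 1 →
      flip n (k + 1) * up n 1 (n - 1) ^ k = up n 1 (n - 1) ^ k * flip n 1 := by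
  intro k
  induction k with
  | zero => intro _; rw [pow_zero, one_mul, mul_one]
  | succ k ih =>
    intro hk
    rw [pow_succ', ← mul_assoc, ← flip_conj hn (by omega) (by omega), mul_assoc,
      ih (by omega), ← mul_assoc, ← pow_succ']

lemma flipsDown_zero : flipsDown n 0 1 = 1 := by
  unfold flipsDown
  rw [show (0 : ℕ) + 1 - 1 = 0 from rfl]
  rfl

lemma flipsDown_succ (k : ℕ) :
    flipsDown n (k + 1) 1 = flip n (k + 1) * flipsDown n k 1 := by
  unfold flipsDown
  rw [show k + 1 + 1 - 1 = k + 1 from rfl, show k + 1 - 1 = k from rfl,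
    List.range'_concat, List.reverse_append, List.map_append, List.prod_append,
    show 1 + 1 * k = k + 1 by omega]
  simp

lemma flipsDown_eq (hn : 2 ≤ n) :
    ∀ k, k ≤ n →
      flipsDown n k 1 = up n 1 (n - 1) ^ k * down n (n - 1) 1 ^ k := by
  intro k
  induction k with
  | zero => intro _; rw [flipsDown_zero, pow_zero, pow_zero, mul_one]
  | succ k ih =>
    intro hk
    rw [flipsDown_succ, ih (by omega), ← mul_assoc, flip_pow_conj hn k (by omega),
      flip_bot hn, pow_succ, pow_succ']
    group

lemma flipsDown_mem {m : ℕ} :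
    ∀ k, k ≤ m → flipsDown n k 1 ∈ Subgroup.closure (flip n '' Set.Icc 1 m) := by
  intro k
  induction k with
  | zero => intro _; rw [flipsDown_zero]; exact one_mem _
  | succ k ih =>
    intro hk
    rw [flipsDown_succ]
    exact mul_mem (Subgroup.subset_closure ⟨k + 1, ⟨by omega, hk⟩, rfl⟩) (ih (by omega))

end Aux7

/-- The subgroup `R_n` generated by `d` and `r_1, …, r_n` coincides with the subgroup generated
by `d` and `r_1, …, r_{n-1}`; in particular `r_n` lies in the latter subgroup, and `d^2` lies
in the subgroup `R_n'` generated by `r_1, …, r_n`. -/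
theorem R_eq_closure_fullTwist_and_first_flips (n : ℕ) (hn : 2 ≤ n) :
    R n = Subgroup.closure ({fullTwist n} ∪ flip n '' Set.Icc 1 (n - 1)) ∧
    flip n n ∈ Subgroup.closure ({fullTwist n} ∪ flip n '' Set.Icc 1 (n - 1)) ∧
    fullTwist n ^ 2 ∈ R' n := by
  have hd2 : fullTwist n ^ 2 = flipsDown n n 1 := by
    rw [flipsDown_eq hn n le_rfl, un_eq_cn n hn]
    unfold fullTwist
    rw [sq]
  have hflipn : flip n n = fullTwist n ^ 2 * (flipsDown n (n - 1) 1)⁻¹ := by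
    have h := flipsDown_succ (n := n) (n - 1)
    rw [show n - 1 + 1 = n by omega] at h
    rw [hd2, h, mul_inv_cancel_right]
  set S : Set (BraidGroup n) := {fullTwist n} ∪ flip n '' Set.Icc 1 (n - 1) with hS
  have hdS : fullTwist n ∈ Subgroup.closure S :=
    Subgroup.subset_closure (Or.inl rfl)
  have hmemS : ∀ i, 1 ≤ i → i ≤ n - 1 → flip n i ∈ Subgroup.closure S :=
    fun i hi1 hi2 => Subgroup.subset_closure (Or.inr ⟨i, ⟨hi1, hi2⟩, rfl⟩)
  have hfdS : flipsDown n (n - 1) 1 ∈ Subgroup.closure S :=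
    Subgroup.closure_mono Set.subset_union_right (flipsDown_mem (n - 1) le_rfl)
  have h2 : flip n n ∈ Subgroup.closure S := by
    rw [hflipn]
    exact mul_mem (pow_mem hdS 2) (inv_mem hfdS)
  refine ⟨?_, h2, ?_⟩
  · apply le_antisymm
    · unfold R
      apply (Subgroup.closure_le _).2
      rintro x (hx | ⟨i, ⟨hi1, hi2⟩, rfl⟩)
      · rw [Set.mem_singleton_iff] at hx
        rw [hx]
        exact hdS
      · rcases eq_or_lt_of_le hi2 with heq | hlt
        · subst heq
          exact h2
        · exact hmemS i hi1 (by omega)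
    · exact Subgroup.closure_mono
        (Set.union_subset_union_right _
          (Set.image_mono (Set.Icc_subset_Icc_right (by omega))))
  · unfold R'
    rw [hd2]
    exact flipsDown_mem n le_rfl

end Braid
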